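/- Let m ≥ 2 be an integer, c > 0 a real, κ = m c²/(m−1), τ = (κ+1)/(m κ), and γ_1, …, γ_m ≥ 0 with sorted values γ_{(1)} ≤ … ≤ γ_{(m)}, and let g be the associated polynomial. Then: (a) for each i ∈ {1, …, m−1}, if γ_{(i)} < γ_{(i+1)} then g has a root in the open interval (κ γ_{(i)}², κ γ_{(i+1)}²), while if γ_{(i)} = γ_{(i+1)} then κ γ_{(i)}² is a root of g; (b) g(0) = 0; (c) g has a negative root θ with θ < −1/τ. -/

import Mathlib

/-- `κ = m c² / (m − 1)`. -/
noncomputable def kappa (m : ℕ) (c : ℝ) : ℝ := (m : ℝ) * c ^ 2 / ((m : ℝ) - 1)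

/-- `τ = (κ + 1)/(m κ)`. -/
noncomputable def tauv (m : ℕ) (c : ℝ) : ℝ := (kappa m c + 1) / ((m : ℝ) * kappa m c)

/-- The polynomial
`g(θ) = −(m+θ) ∏ᵢ (κ γᵢ² − θ) + (κ + ((κ+1)/m) θ) Σᵢ γᵢ² ∏_{j≠i} (κ γⱼ² − θ)`. -/
noncomputable def gfun (m : ℕ) (c : ℝ) (γ : Fin m → ℝ) (θ : ℝ) : ℝ :=
  -((m : ℝ) + θ) * ∏ i, (kappa m c * γ i ^ 2 - θ) +
    (kappa m c + (kappa m c + 1) / (m : ℝ) * θ) *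
      ∑ i, γ i ^ 2 * ∏ j ∈ Finset.univ.erase i, (kappa m c * γ j ^ 2 - θ)

/-- The `i`-th smallest value (0-indexed) among `y_1, …, y_m`. -/
noncomputable def sortedVal (m : ℕ) (y : Fin m → ℝ) (i : Fin m) : ℝ := y (Tuple.sort y i)

open Finset

namespace Stmt12Aux
variable (m : ℕ) (c : ℝ) (γ : Fin m → ℝ)
noncomputable def Aset (s : ℝ) : Finset (Fin m) := univ.filter (fun j => γ j = s)
noncomputable def Bset (s : ℝ) : Finset (Fin m) := univ.filter (fun j => ¬ γ j = s)
noncomputable def Lf (θ : ℝ) : ℝ := kappa m c + (kappa m c + 1) / (m : ℝ) * θ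
noncomputable def Qf (s θ : ℝ) : ℝ := ∏ j ∈ Bset m γ s, (kappa m c * γ j ^ 2 - θ)
noncomputable def Rf (s θ : ℝ) : ℝ :=
  ∑ a ∈ Bset m γ s, γ a ^ 2 * ∏ j ∈ (Bset m γ s).erase a, (kappa m c * γ j ^ 2 - θ)
noncomputable def Gf (s θ : ℝ) : ℝ :=
  -((m : ℝ) + θ) * (kappa m c * s ^ 2 - θ) * Qf m c γ s θ +
    Lf m c θ * (((Aset m γ s).card : ℝ) * s ^ 2 * Qf m c γ s θ +
      (kappa m c * s ^ 2 - θ) * Rf m c γ s θ)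
noncomputable def Hf (θ : ℝ) : ℝ :=
  -((m : ℝ) + θ) * Qf m c γ 0 θ + Lf m c θ * Rf m c γ 0 θ

lemma kappa_pos (hm : 2 ≤ m) (hc : 0 < c) : 0 < kappa m c := by
  have h1 : (2 : ℝ) ≤ (m : ℝ) := by exact_mod_cast hm
  exact div_pos (mul_pos (by linarith) (pow_pos hc 2)) (by linarith)

lemma cont_Qf (s : ℝ) : Continuous (Qf m c γ s) := by
  unfold Qf
  exact continuous_finset_prod _ fun j _ => by fun_prop

lemma cont_Rf (s : ℝ) : Continuous (Rf m c γ s) := by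
  unfold Rf
  exact continuous_finset_sum _ fun a _ =>
    continuous_const.mul (continuous_finset_prod _ fun j _ => by fun_prop)

lemma cont_Gf (s : ℝ) : Continuous (Gf m c γ s) := by
  have hq := cont_Qf m c γ s
  have hr := cont_Rf m c γ s
  unfold Gf Lf
  fun_prop

lemma cont_Hf : Continuous (Hf m c γ) := by
  have hq := cont_Qf m c γ 0
  have hr := cont_Rf m c γ 0
  unfold Hf Lf
  fun_prop

lemma cont_gfun : Continuous (gfun m c γ) := by
  unfold gfun
  have h1 : Continuous fun θ : ℝ => ∏ i, (kappa m c * γ i ^ 2 - θ) :=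
    continuous_finset_prod _ fun j _ => by fun_prop
  have h2 : Continuous fun θ : ℝ =>
      ∑ i, γ i ^ 2 * ∏ j ∈ Finset.univ.erase i, (kappa m c * γ j ^ 2 - θ) :=
    continuous_finset_sum _ fun a _ =>
      continuous_const.mul (continuous_finset_prod _ fun j _ => by fun_prop)
  fun_prop

lemma Qv_sign (hm : 2 ≤ m) (hc : 0 < c) (hγ : ∀ i, 0 ≤ γ i) (s : ℝ) (hs0 : 0 ≤ s) :
    0 < (-1 : ℝ) ^ (univ.filter (fun j => γ j < s)).card
        * Qf m c γ s (kappa m c * s ^ 2) := by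
  have hK := kappa_pos m c hm hc
  unfold Qf
  rw [← prod_filter_mul_prod_filter_not (Bset m γ s) (fun j => γ j < s)]
  have hN : (Bset m γ s).filter (fun j => γ j < s) = univ.filter (fun j => γ j < s) := by
    unfold Bset
    rw [filter_filter]
    exact filter_congr fun j _ => by
      constructor
      · exact fun h => h.2
      · exact fun h => ⟨ne_of_lt h, h⟩
  rw [hN]
  have key : (-1 : ℝ) ^ (univ.filter (fun j => γ j < s)).card
        * ((∏ j ∈ univ.filter (fun j => γ j < s), (kappa m c * γ j ^ 2 - kappa m c * s ^ 2))
          * ∏ j ∈ (Bset m γ s).filter (fun j => ¬ γ j < s),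
              (kappa m c * γ j ^ 2 - kappa m c * s ^ 2))
      = (∏ j ∈ univ.filter (fun j => γ j < s), (kappa m c * s ^ 2 - kappa m c * γ j ^ 2))
          * ∏ j ∈ (Bset m γ s).filter (fun j => ¬ γ j < s),
              (kappa m c * γ j ^ 2 - kappa m c * s ^ 2) := by
    rw [← mul_assoc, ← prod_const (-1 : ℝ), ← prod_mul_distrib]
    congr 1
    exact prod_congr rfl fun j _ => by ring
  rw [key]
  apply mul_pos
  · apply prod_pos
    intro j hj
    have hjs : γ j < s := (mem_filter.1 hj).2
    have : γ j ^ 2 < s ^ 2 := by nlinarith [hγ j]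
    nlinarith
  · apply prod_pos
    intro j hj
    have h1 : ¬ γ j = s := by
      have := (mem_filter.1 hj).1
      simpa [Bset] using this
    have h2 : ¬ γ j < s := (mem_filter.1 hj).2
    have : s < γ j := lt_of_le_of_ne (not_lt.1 h2) (Ne.symm h1)
    have : s ^ 2 < γ j ^ 2 := by nlinarith
    nlinarith

lemma Gf_at_v (s : ℝ) :
    Gf m c γ s (kappa m c * s ^ 2)
      = Lf m c (kappa m c * s ^ 2)
          * (((Aset m γ s).card : ℝ) * s ^ 2 * Qf m c γ s (kappa m c * s ^ 2)) := by
  simp [Gf, sub_self]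

lemma Lf_pos (hm : 2 ≤ m) (hc : 0 < c) {θ : ℝ} (hθ : 0 ≤ θ) : 0 < Lf m c θ := by
  have hK := kappa_pos m c hm hc
  have hm0 : (0 : ℝ) < (m : ℝ) := by
    have : 0 < m := by omega
    exact_mod_cast this
  unfold Lf
  have : 0 ≤ (kappa m c + 1) / (m : ℝ) * θ := by positivity
  linarith
lemma gfun_eq (s θ : ℝ) (hs : (Aset m γ s).Nonempty) :
    gfun m c γ θ
      = (kappa m c * s ^ 2 - θ) ^ ((Aset m γ s).card - 1) * Gf m c γ s θ := by
  obtain ⟨n, hn⟩ : ∃ n, (Aset m γ s).card = n + 1 :=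
    ⟨(Aset m γ s).card - 1, (Nat.succ_pred_eq_of_pos hs.card_pos).symm⟩
  have hAmem : ∀ j ∈ Aset m γ s, γ j = s := fun j hj => by simpa [Aset] using hj
  have hBnotA : ∀ a ∈ Bset m γ s, ¬ γ a = s := fun a ha => by simpa [Bset] using ha
  have hA : ∀ (T : Finset (Fin m)), (∀ j ∈ T, γ j = s) →
      ∏ j ∈ T, (kappa m c * γ j ^ 2 - θ) = (kappa m c * s ^ 2 - θ) ^ T.card := by
    intro T hT
    rw [← prod_const]
    exact prod_congr rfl fun j hj => by rw [hT j hj]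
  have h1 : ∏ j, (kappa m c * γ j ^ 2 - θ)
      = (kappa m c * s ^ 2 - θ) ^ (n + 1) * Qf m c γ s θ := by
    rw [← prod_filter_mul_prod_filter_not univ (fun j => γ j = s)]
    have := hA (Aset m γ s) hAmem
    rw [Aset] at this
    rw [this, Qf, Bset]
    rw [show (filter (fun j => γ j = s) univ).card = (Aset m γ s).card from rfl, hn]
  have heA : ∀ a ∈ Aset m γ s,
      ∏ j ∈ univ.erase a, (kappa m c * γ j ^ 2 - θ)
        = (kappa m c * s ^ 2 - θ) ^ n * Qf m c γ s θ := by
    intro a ha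
    rw [← prod_filter_mul_prod_filter_not (univ.erase a) (fun j => γ j = s),
      filter_erase, filter_erase]
    have h2 : (filter (fun j => ¬ γ j = s) univ).erase a = Bset m γ s :=
      erase_eq_of_notMem (fun hmem => hBnotA a hmem (hAmem a ha))
    have h3 : ∏ j ∈ (filter (fun j => γ j = s) univ).erase a, (kappa m c * γ j ^ 2 - θ)
        = (kappa m c * s ^ 2 - θ) ^ n := by
      rw [hA ((filter (fun j => γ j = s) univ).erase a)
          (fun j hj => hAmem j (by exact mem_of_mem_erase hj)),
        card_erase_of_mem (by exact ha),
        show (filter (fun j => γ j = s) univ).card = n + 1 from hn]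
      simp
    rw [h2, h3, Qf]
  have heB : ∀ a ∈ Bset m γ s,
      ∏ j ∈ univ.erase a, (kappa m c * γ j ^ 2 - θ)
        = (kappa m c * s ^ 2 - θ) ^ (n + 1)
            * ∏ j ∈ (Bset m γ s).erase a, (kappa m c * γ j ^ 2 - θ) := by
    intro a ha
    rw [← prod_filter_mul_prod_filter_not (univ.erase a) (fun j => γ j = s),
      filter_erase, filter_erase]
    have h2 : (filter (fun j => γ j = s) univ).erase a = Aset m γ s :=
      erase_eq_of_notMem (fun hmem => hBnotA a ha (hAmem a hmem))
    rw [h2, hA _ hAmem, hn]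
    rfl
  have hsum : ∑ i, γ i ^ 2 * ∏ j ∈ univ.erase i, (kappa m c * γ j ^ 2 - θ)
      = ((Aset m γ s).card : ℝ) * (s ^ 2 * ((kappa m c * s ^ 2 - θ) ^ n * Qf m c γ s θ))
        + (kappa m c * s ^ 2 - θ) ^ (n + 1) * Rf m c γ s θ := by
    rw [← sum_filter_add_sum_filter_not univ (fun j => γ j = s)]
    congr 1
    · have e1 : ∑ a ∈ Aset m γ s, γ a ^ 2 * ∏ j ∈ univ.erase a, (kappa m c * γ j ^ 2 - θ)
          = ∑ _a ∈ Aset m γ s,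
              s ^ 2 * ((kappa m c * s ^ 2 - θ) ^ n * Qf m c γ s θ) :=
        sum_congr rfl fun a ha => by rw [heA a ha, hAmem a ha]
      rw [show filter (fun j => γ j = s) univ = Aset m γ s from rfl, e1, sum_const,
        nsmul_eq_mul]
    · have e2 : ∑ a ∈ Bset m γ s, γ a ^ 2 * ∏ j ∈ univ.erase a, (kappa m c * γ j ^ 2 - θ)
          = ∑ a ∈ Bset m γ s, (kappa m c * s ^ 2 - θ) ^ (n + 1)
              * (γ a ^ 2 * ∏ j ∈ (Bset m γ s).erase a, (kappa m c * γ j ^ 2 - θ)) :=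
        sum_congr rfl fun a ha => by rw [heB a ha]; ring
      rw [show filter (fun j => ¬ γ j = s) univ = Bset m γ s from rfl, e2, ← mul_sum, Rf]
  rw [gfun, h1, hsum, hn]
  simp only [Gf, Lf, hn, Nat.add_sub_cancel, pow_succ]
  push_cast
  ring



lemma Gf_zero_eq (θ : ℝ) : Gf m c γ 0 θ = (-θ) * Hf m c γ θ := by
  unfold Gf Hf Lf
  ring

lemma Hf_zero_neg (hm : 2 ≤ m) (hc : 0 < c) (hγ : ∀ i, 0 ≤ γ i)
    (hsat : ∃ a, γ a = 0) : Hf m c γ 0 < 0 := by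
  have hK := kappa_pos m c hm hc
  have hQ : 0 < Qf m c γ 0 0 := by
    unfold Qf
    apply prod_pos
    intro j hj
    have h1 : ¬ γ j = 0 := by
      have := hj; simp [Bset] at this; exact this
    have h2 : 0 < γ j := lt_of_le_of_ne (hγ j) (Ne.symm h1)
    have := mul_pos hK (pow_pos h2 2)
    linarith
  have hKR : kappa m c * Rf m c γ 0 0 = ((Bset m γ 0).card : ℝ) * Qf m c γ 0 0 := by
    unfold Rf
    rw [mul_sum]
    have e : ∀ a ∈ Bset m γ 0,
        kappa m c * (γ a ^ 2 * ∏ j ∈ (Bset m γ 0).erase a, (kappa m c * γ j ^ 2 - 0))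
          = Qf m c γ 0 0 := by
      intro a ha
      unfold Qf
      rw [← mul_prod_erase (Bset m γ 0) (fun j => kappa m c * γ j ^ 2 - 0) ha]
      ring
    rw [sum_congr rfl e, sum_const, nsmul_eq_mul]
  have hcard : ((Aset m γ 0).card : ℝ) + ((Bset m γ 0).card : ℝ) = (m : ℝ) := by
    have := card_filter_add_card_filter_not (s := (univ : Finset (Fin m)))
      (p := fun j => γ j = 0)
    rw [card_univ, Fintype.card_fin] at this
    exact_mod_cast this
  have hk1 : 0 < ((Aset m γ 0).card : ℝ) := by
    obtain ⟨a, ha⟩ := hsat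
    have : a ∈ Aset m γ 0 := by simp [Aset, ha]
    have := card_pos.2 ⟨a, this⟩
    exact_mod_cast this
  have hL0 : Lf m c 0 = kappa m c := by unfold Lf; ring
  have : Hf m c γ 0 = -(((Aset m γ 0).card : ℝ)) * Qf m c γ 0 0 := by
    unfold Hf
    rw [hL0, hKR]
    nlinarith [hcard]
  rw [this]
  nlinarith



variable (m : ℕ) (c : ℝ) (γ : Fin m → ℝ)

lemma sign_below (hm : 2 ≤ m) (hc : 0 < c) (hγ : ∀ i, 0 ≤ γ i) (s : ℝ) (hs0 : 0 < s)
    (hsat : ∃ a, γ a = s) :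
    ∃ δ > 0, ∀ θ : ℝ, kappa m c * s ^ 2 - δ < θ → θ < kappa m c * s ^ 2 →
      0 < (-1 : ℝ) ^ (univ.filter (fun j => γ j < s)).card * gfun m c γ θ := by
  have hK := kappa_pos m c hm hc
  have hA : (Aset m γ s).Nonempty := by
    obtain ⟨a, ha⟩ := hsat; exact ⟨a, by simp [Aset, ha]⟩
  set n := (univ.filter (fun j => γ j < s)).card with hn
  have hGv : 0 < (-1 : ℝ) ^ n * Gf m c γ s (kappa m c * s ^ 2) := by
    have hQ := Qv_sign m c γ hm hc hγ s hs0.le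
    have hL := Lf_pos m c hm hc (θ := kappa m c * s ^ 2) (by positivity)
    have hk : 0 < ((Aset m γ s).card : ℝ) := by exact_mod_cast card_pos.2 hA
    have e : (-1 : ℝ) ^ n * Gf m c γ s (kappa m c * s ^ 2)
        = (Lf m c (kappa m c * s ^ 2) * (((Aset m γ s).card : ℝ) * s ^ 2))
            * ((-1 : ℝ) ^ n * Qf m c γ s (kappa m c * s ^ 2)) := by
      rw [Gf_at_v]; ring
    rw [e]
    exact mul_pos (mul_pos hL (mul_pos hk (pow_pos hs0 2))) hQ
  have hopen : {θ : ℝ | 0 < (-1 : ℝ) ^ n * Gf m c γ s θ} ∈ nhds (kappa m c * s ^ 2) :=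
    (isOpen_lt continuous_const (continuous_const.mul (cont_Gf m c γ s))).mem_nhds hGv
  obtain ⟨δ, hδ, hball⟩ := Metric.mem_nhds_iff.1 hopen
  refine ⟨δ, hδ, fun θ h1 h2 => ?_⟩
  have hGθ : 0 < (-1 : ℝ) ^ n * Gf m c γ s θ := hball (by
    rw [Metric.mem_ball, Real.dist_eq, abs_lt]; constructor <;> linarith)
  have e2 : (-1 : ℝ) ^ n * gfun m c γ θ
      = (kappa m c * s ^ 2 - θ) ^ ((Aset m γ s).card - 1)
          * ((-1 : ℝ) ^ n * Gf m c γ s θ) := by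
    rw [gfun_eq m c γ s θ hA]; ring
  rw [e2]
  exact mul_pos (pow_pos (by linarith) _) hGθ

lemma sign_above (hm : 2 ≤ m) (hc : 0 < c) (hγ : ∀ i, 0 ≤ γ i) (s : ℝ) (hs0 : 0 ≤ s)
    (hsat : ∃ a, γ a = s) :
    ∃ δ > 0, ∀ θ : ℝ, kappa m c * s ^ 2 < θ → θ < kappa m c * s ^ 2 + δ →
      0 < (-1 : ℝ) ^ ((univ.filter (fun j => γ j < s)).card + ((Aset m γ s).card - 1))
          * gfun m c γ θ := by
  have hK := kappa_pos m c hm hc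
  have hA : (Aset m γ s).Nonempty := by
    obtain ⟨a, ha⟩ := hsat; exact ⟨a, by simp [Aset, ha]⟩
  rcases hs0.lt_or_eq with hs | hs
  · -- s > 0
    set n := (univ.filter (fun j => γ j < s)).card with hn
    have hGv : 0 < (-1 : ℝ) ^ n * Gf m c γ s (kappa m c * s ^ 2) := by
      have hQ := Qv_sign m c γ hm hc hγ s hs0
      have hL := Lf_pos m c hm hc (θ := kappa m c * s ^ 2) (by positivity)
      have hk : 0 < ((Aset m γ s).card : ℝ) := by exact_mod_cast card_pos.2 hA
      have e : (-1 : ℝ) ^ n * Gf m c γ s (kappa m c * s ^ 2)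
          = (Lf m c (kappa m c * s ^ 2) * (((Aset m γ s).card : ℝ) * s ^ 2))
              * ((-1 : ℝ) ^ n * Qf m c γ s (kappa m c * s ^ 2)) := by
        rw [Gf_at_v]; ring
      rw [e]
      exact mul_pos (mul_pos hL (mul_pos hk (pow_pos hs 2))) hQ
    have hopen : {θ : ℝ | 0 < (-1 : ℝ) ^ n * Gf m c γ s θ} ∈ nhds (kappa m c * s ^ 2) :=
      (isOpen_lt continuous_const (continuous_const.mul (cont_Gf m c γ s))).mem_nhds hGv
    obtain ⟨δ, hδ, hball⟩ := Metric.mem_nhds_iff.1 hopen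
    refine ⟨δ, hδ, fun θ h1 h2 => ?_⟩
    have hGθ : 0 < (-1 : ℝ) ^ n * Gf m c γ s θ := hball (by
      rw [Metric.mem_ball, Real.dist_eq, abs_lt]; constructor <;> linarith)
    have e2 : (-1 : ℝ) ^ (n + ((Aset m γ s).card - 1)) * gfun m c γ θ
        = (θ - kappa m c * s ^ 2) ^ ((Aset m γ s).card - 1)
            * ((-1 : ℝ) ^ n * Gf m c γ s θ) := by
      rw [gfun_eq m c γ s θ hA, pow_add]
      have : (θ - kappa m c * s ^ 2) ^ ((Aset m γ s).card - 1)
          = (-1 : ℝ) ^ ((Aset m γ s).card - 1)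
              * (kappa m c * s ^ 2 - θ) ^ ((Aset m γ s).card - 1) := by
        rw [← neg_one_mul, ← mul_pow]; ring_nf
      rw [this]; ring
    rw [e2]
    exact mul_pos (pow_pos (by linarith) _) hGθ
  · -- s = 0
    subst hs
    have hn0 : (univ.filter (fun j => γ j < (0:ℝ))).card = 0 :=
      card_eq_zero.2 (filter_eq_empty_iff.2 fun j _ => not_lt.2 (hγ j))
    have hH0 : Hf m c γ 0 < 0 := Hf_zero_neg m c γ hm hc hγ (by
      obtain ⟨a, ha⟩ := hsat; exact ⟨a, ha⟩)
    have hopen : {θ : ℝ | Hf m c γ θ < 0} ∈ nhds (0 : ℝ) :=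
      (isOpen_lt (cont_Hf m c γ) continuous_const).mem_nhds hH0
    obtain ⟨δ, hδ, hball⟩ := Metric.mem_nhds_iff.1 hopen
    have hv : kappa m c * (0:ℝ) ^ 2 = 0 := by ring
    rw [hv]
    refine ⟨δ, hδ, fun θ h1 h2 => ?_⟩
    have hHθ : Hf m c γ θ < 0 := hball (by
      rw [Metric.mem_ball, Real.dist_eq, sub_zero, abs_lt]; constructor <;> linarith)
    have e2 : (-1 : ℝ) ^ ((univ.filter (fun j => γ j < (0:ℝ))).card
          + ((Aset m γ (0:ℝ)).card - 1)) * gfun m c γ θ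
        = θ ^ ((Aset m γ (0:ℝ)).card - 1) * ((-θ) * Hf m c γ θ) := by
      rw [hn0, gfun_eq m c γ 0 θ hA, Gf_zero_eq]
      have : θ ^ ((Aset m γ (0:ℝ)).card - 1)
          = (-1 : ℝ) ^ ((Aset m γ (0:ℝ)).card - 1)
              * (kappa m c * (0:ℝ) ^ 2 - θ) ^ ((Aset m γ (0:ℝ)).card - 1) := by
        rw [← neg_one_mul, ← mul_pow]; ring_nf
      rw [this]; ring
    rw [e2]
    exact mul_pos (pow_pos h1 _) (mul_pos_of_neg_of_neg (by linarith) hHθ)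

lemma count_transfer (P : ℝ → Prop) [DecidablePred P] :
    (univ.filter (fun p : Fin m => P (γ (Tuple.sort γ p)))).card
      = (univ.filter (fun j : Fin m => P (γ j))).card := by
  apply card_bij (fun p _ => Tuple.sort γ p)
  · intro a ha
    simp only [mem_filter, mem_univ, true_and] at ha ⊢
    exact ha
  · intro a _ b _ h
    exact (Tuple.sort γ).injective h
  · intro b hb
    simp only [mem_filter, mem_univ, true_and] at hb
    refine ⟨(Tuple.sort γ).symm b, ?_, ?_⟩
    · simp only [mem_filter, mem_univ, true_and, Equiv.apply_symm_apply]
      exact hb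
    · simp

lemma count_lt_sorted (i : ℕ) (hi : i + 1 < m) (f : Fin m → ℝ) (mono : Monotone f)
    (hlt : f ⟨i, Nat.lt_of_succ_lt hi⟩ < f ⟨i + 1, hi⟩) :
    (univ.filter (fun p : Fin m => f p < f ⟨i + 1, hi⟩)).card = i + 1 := by
  have heq : univ.filter (fun p : Fin m => f p < f ⟨i + 1, hi⟩)
      = Iio (⟨i + 1, hi⟩ : Fin m) := by
    ext p
    simp only [mem_filter, mem_univ, true_and, mem_Iio]
    constructor
    · intro h
      by_contra hcon
      push_neg at hcon
      exact absurd (mono hcon) (not_le.2 h)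
    · intro h
      have hp : (p : ℕ) ≤ i := Nat.lt_succ_iff.mp (Fin.lt_def.1 h)
      calc f p ≤ f ⟨i, Nat.lt_of_succ_lt hi⟩ := mono (Fin.le_def.2 hp)
        _ < f ⟨i + 1, hi⟩ := hlt
  rw [heq, Fin.card_Iio]

lemma count_le_sorted (i : ℕ) (hi : i + 1 < m) (f : Fin m → ℝ) (mono : Monotone f)
    (hlt : f ⟨i, Nat.lt_of_succ_lt hi⟩ < f ⟨i + 1, hi⟩) :
    (univ.filter (fun p : Fin m => f p < f ⟨i, Nat.lt_of_succ_lt hi⟩)).card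
      + (univ.filter (fun p : Fin m => f p = f ⟨i, Nat.lt_of_succ_lt hi⟩)).card = i + 1 := by
  have hdisj : Disjoint (univ.filter (fun p : Fin m => f p < f ⟨i, Nat.lt_of_succ_lt hi⟩))
      (univ.filter (fun p : Fin m => f p = f ⟨i, Nat.lt_of_succ_lt hi⟩)) := by
    rw [disjoint_left]
    intro a ha hb
    have h1 : f a < f ⟨i, Nat.lt_of_succ_lt hi⟩ := (mem_filter.1 ha).2
    have h2 : f a = f ⟨i, Nat.lt_of_succ_lt hi⟩ := (mem_filter.1 hb).2
    exact absurd h2 (ne_of_lt h1)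
  have hunion : (univ.filter (fun p : Fin m => f p < f ⟨i, Nat.lt_of_succ_lt hi⟩))
      ∪ (univ.filter (fun p : Fin m => f p = f ⟨i, Nat.lt_of_succ_lt hi⟩))
      = univ.filter (fun p : Fin m => f p ≤ f ⟨i, Nat.lt_of_succ_lt hi⟩) := by
    rw [← filter_or]
    exact filter_congr fun p _ => by rw [le_iff_lt_or_eq]
  have hIic : univ.filter (fun p : Fin m => f p ≤ f ⟨i, Nat.lt_of_succ_lt hi⟩)
      = Iic (⟨i, Nat.lt_of_succ_lt hi⟩ : Fin m) := by
    ext p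
    simp only [mem_filter, mem_univ, true_and, mem_Iic]
    constructor
    · intro h
      by_contra hcon
      push_neg at hcon
      have hp : (⟨i + 1, hi⟩ : Fin m) ≤ p := Fin.le_def.2 (Fin.lt_def.1 hcon)
      exact absurd (lt_of_lt_of_le hlt (mono hp)) (not_lt.2 h)
    · exact fun h => mono h
  have := card_union_of_disjoint hdisj
  rw [hunion, hIic, Fin.card_Iic] at this
  have hval : ((⟨i, Nat.lt_of_succ_lt hi⟩ : Fin m) : ℕ) = i := rfl
  rw [hval] at this
  omega


lemma gfun_zero (hm : 2 ≤ m) (hc : 0 < c) : gfun m c γ 0 = 0 := by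
  have e2 : kappa m c * (∑ i, γ i ^ 2 * ∏ j ∈ univ.erase i, (kappa m c * γ j ^ 2 - 0))
      = (m : ℝ) * ∏ j, (kappa m c * γ j ^ 2 - 0) := by
    rw [mul_sum]
    have h : ∀ i ∈ (univ : Finset (Fin m)),
        kappa m c * (γ i ^ 2 * ∏ j ∈ univ.erase i, (kappa m c * γ j ^ 2 - 0))
          = ∏ j, (kappa m c * γ j ^ 2 - 0) := by
      intro i _
      rw [← mul_prod_erase univ (fun j => kappa m c * γ j ^ 2 - 0) (mem_univ i)]
      ring
    rw [sum_congr rfl h, sum_const, card_univ, Fintype.card_fin, nsmul_eq_mul]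
  unfold gfun
  linear_combination e2

lemma part_c (hm : 2 ≤ m) (hc : 0 < c) (hγ : ∀ i, 0 ≤ γ i) :
    ∃ θ : ℝ, θ < -(tauv m c)⁻¹ ∧ gfun m c γ θ = 0 := by
  have hK := kappa_pos m c hm hc
  have hm0 : (0 : ℝ) < (m : ℝ) := by
    have : 0 < m := by omega
    exact_mod_cast this
  have hK1 : (0 : ℝ) < kappa m c + 1 := by linarith
  set K := kappa m c with hKdef
  set θ0 : ℝ := -((m : ℝ) * K / (K + 1)) with hθ0
  have htau : -(tauv m c)⁻¹ = θ0 := by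
    unfold tauv
    rw [inv_div, hθ0]
  have hθ0neg : θ0 < 0 := by
    rw [hθ0]
    have : 0 < (m : ℝ) * K / (K + 1) := by positivity
    linarith
  have hmθ0 : 0 < (m : ℝ) + θ0 := by
    rw [hθ0]
    have e : (m : ℝ) + -((m : ℝ) * K / (K + 1)) = (m : ℝ) / (K + 1) := by
      field_simp
      ring
    rw [e]
    positivity
  have hL0 : K + (K + 1) / (m : ℝ) * θ0 = 0 := by
    rw [hθ0]
    field_simp
    ring
  have hP0 : 0 < ∏ i, (K * γ i ^ 2 - θ0) := by
    apply prod_pos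
    intro i _
    have := mul_nonneg hK.le (sq_nonneg (γ i))
    linarith
  have hgθ0 : gfun m c γ θ0 < 0 := by
    have hL0' : kappa m c + (kappa m c + 1) / (m : ℝ) * θ0 = 0 := hL0
    have hP0' : 0 < ∏ i, (kappa m c * γ i ^ 2 - θ0) := hP0
    unfold gfun
    rw [hL0', zero_mul, add_zero]
    exact mul_neg_of_neg_of_pos (by linarith) hP0'
  -- the far-left point
  set S : ℝ := ∑ i, γ i ^ 2 with hSdef
  have hS0 : 0 ≤ S := sum_nonneg fun i _ => sq_nonneg _
  have hKS0 : 0 ≤ K * S := mul_nonneg hK.le hS0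
  set D : ℝ := (K + 1) / (m : ℝ) * S * (K * S + 1) ^ (m - 1) with hDdef
  have hD0 : 0 ≤ D := by positivity
  set x : ℝ := (m : ℝ) + D + (m : ℝ) * K / (K + 1) + 1 with hxdef
  have hmk0 : 0 < (m : ℝ) * K / (K + 1) := by positivity
  have hx1 : 1 ≤ x := by rw [hxdef]; linarith
  have hx0 : 0 < x := by linarith
  have hxm : (m : ℝ) ≤ x := by rw [hxdef]; linarith
  have hsq : ∀ i, γ i ^ 2 ≤ S :=
    fun i => single_le_sum (f := fun i => γ i ^ 2) (fun j _ => sq_nonneg _) (mem_univ i)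
  have hP : x ^ m ≤ ∏ i, (K * γ i ^ 2 + x) := by
    calc x ^ m = ∏ _i : Fin m, x := by rw [prod_const, card_univ, Fintype.card_fin]
    _ ≤ ∏ i, (K * γ i ^ 2 + x) := by
        apply prod_le_prod
        · intro i _
          exact hx0.le
        · intro i _
          have := mul_nonneg hK.le (sq_nonneg (γ i))
          linarith
  have hprode : ∀ i : Fin m, ∏ j ∈ univ.erase i, (K * γ j ^ 2 + x)
      ≤ ((K * S + 1) * x) ^ (m - 1) := by
    intro i
    calc ∏ j ∈ univ.erase i, (K * γ j ^ 2 + x)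
        ≤ ∏ _j ∈ univ.erase i, ((K * S + 1) * x) := by
          apply prod_le_prod
          · intro j _
            have := mul_nonneg hK.le (sq_nonneg (γ j))
            linarith
          · intro j _
            have h1 : K * γ j ^ 2 ≤ K * S := mul_le_mul_of_nonneg_left (hsq j) hK.le
            nlinarith [mul_nonneg hKS0 (sub_nonneg.2 hx1)]
    _ = ((K * S + 1) * x) ^ (m - 1) := by
          rw [prod_const, card_erase_of_mem (mem_univ i), card_univ, Fintype.card_fin]
  have hSig : ∑ i, γ i ^ 2 * ∏ j ∈ univ.erase i, (K * γ j ^ 2 + x)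
      ≤ S * ((K * S + 1) * x) ^ (m - 1) := by
    calc ∑ i, γ i ^ 2 * ∏ j ∈ univ.erase i, (K * γ j ^ 2 + x)
        ≤ ∑ i, γ i ^ 2 * ((K * S + 1) * x) ^ (m - 1) :=
          sum_le_sum fun i _ => mul_le_mul_of_nonneg_left (hprode i) (sq_nonneg _)
    _ = S * ((K * S + 1) * x) ^ (m - 1) := by rw [← sum_mul]
  have hLneg : K + (K + 1) / (m : ℝ) * (-x) ≤ 0 := by
    have e : (K + 1) / (m : ℝ) * ((m : ℝ) * K / (K + 1)) = K := by
      field_simp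
    have h2 : (K + 1) / (m : ℝ) * ((m : ℝ) * K / (K + 1)) ≤ (K + 1) / (m : ℝ) * x := by
      apply mul_le_mul_of_nonneg_left _ (by positivity)
      rw [hxdef]; linarith
    rw [e] at h2
    linarith
  have hL2 : -((K + 1) / (m : ℝ) * x) ≤ K + (K + 1) / (m : ℝ) * (-x) := by linarith
  have hgx : gfun m c γ (-x) = ((x - (m : ℝ)) * ∏ i, (K * γ i ^ 2 + x))
      + (K + (K + 1) / (m : ℝ) * (-x))
          * ∑ i, γ i ^ 2 * ∏ j ∈ univ.erase i, (K * γ j ^ 2 + x) := by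
    unfold gfun
    rw [← hKdef]
    simp only [sub_neg_eq_add]
    ring
  have hC0 : 0 ≤ S * ((K * S + 1) * x) ^ (m - 1) := by positivity
  have h1 : (x - (m : ℝ)) * x ^ m ≤ (x - (m : ℝ)) * ∏ i, (K * γ i ^ 2 + x) :=
    mul_le_mul_of_nonneg_left hP (by linarith)
  have h2 : (K + (K + 1) / (m : ℝ) * (-x)) * (S * ((K * S + 1) * x) ^ (m - 1))
      ≤ (K + (K + 1) / (m : ℝ) * (-x))
          * ∑ i, γ i ^ 2 * ∏ j ∈ univ.erase i, (K * γ j ^ 2 + x) :=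
    mul_le_mul_of_nonpos_left hSig hLneg
  have h3 : -((K + 1) / (m : ℝ) * x) * (S * ((K * S + 1) * x) ^ (m - 1))
      ≤ (K + (K + 1) / (m : ℝ) * (-x)) * (S * ((K * S + 1) * x) ^ (m - 1)) :=
    mul_le_mul_of_nonneg_right hL2 hC0
  have hm1 : m - 1 + 1 = m := by omega
  have hxmul : x * x ^ (m - 1) = x ^ m := by
    calc x * x ^ (m - 1) = x ^ (m - 1 + 1) := (pow_succ' x (m - 1)).symm
    _ = x ^ m := by rw [hm1]
  have e4 : -((K + 1) / (m : ℝ) * x) * (S * ((K * S + 1) * x) ^ (m - 1))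
      = -((K + 1) / (m : ℝ) * S * (K * S + 1) ^ (m - 1) * x ^ m) := by
    rw [mul_pow, ← hxmul]
    ring
  have key : (x - (m : ℝ)) * x ^ m - (K + 1) / (m : ℝ) * S * (K * S + 1) ^ (m - 1) * x ^ m
      ≤ gfun m c γ (-x) := by
    rw [hgx]
    have h23 := le_trans h3 h2
    rw [e4] at h23
    linarith [add_le_add h1 h23]
  have e2' : (x - (m : ℝ)) - (K + 1) / (m : ℝ) * S * (K * S + 1) ^ (m - 1)
      = (m : ℝ) * K / (K + 1) + 1 := by
    rw [hxdef, hDdef]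
    ring
  have e3 : (x - (m : ℝ)) * x ^ m - (K + 1) / (m : ℝ) * S * (K * S + 1) ^ (m - 1) * x ^ m
      = ((m : ℝ) * K / (K + 1) + 1) * x ^ m := by
    linear_combination x ^ m * e2'
  have hposfin : 0 < ((m : ℝ) * K / (K + 1) + 1) * x ^ m := by positivity
  have hgxpos : 0 < gfun m c γ (-x) := by
    rw [e3] at key
    linarith
  have hxθ0 : -x < θ0 := by
    rw [hθ0, hxdef]
    linarith
  have h0mem : (0 : ℝ) ∈ Set.Ioo (gfun m c γ θ0) (gfun m c γ (-x)) := ⟨hgθ0, hgxpos⟩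
  obtain ⟨θ, hθmem, hθeq⟩ :=
    intermediate_value_Ioo' hxθ0.le (cont_gfun m c γ).continuousOn h0mem
  exact ⟨θ, by rw [htau]; exact hθmem.2, hθeq⟩

end Stmt12Aux

open Stmt12Aux

/-- Lemma S4 of the paper: location of the roots of `g`. Part (a) is stated with the
0-indexed consecutive pairs `(i, i+1)`, `0 ≤ i ≤ m−2`, of sorted values of `γ`. -/
theorem stmt12 (m : ℕ) (hm : 2 ≤ m) (c : ℝ) (hc : 0 < c)
    (γ : Fin m → ℝ) (hγ : ∀ i, 0 ≤ γ i) :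
    (∀ i : ℕ, ∀ hi : i + 1 < m,
      (sortedVal m γ ⟨i, by omega⟩ < sortedVal m γ ⟨i + 1, hi⟩ →
        ∃ θ : ℝ, θ ∈ Set.Ioo (kappa m c * sortedVal m γ ⟨i, by omega⟩ ^ 2)
            (kappa m c * sortedVal m γ ⟨i + 1, hi⟩ ^ 2) ∧ gfun m c γ θ = 0) ∧
      (sortedVal m γ ⟨i, by omega⟩ = sortedVal m γ ⟨i + 1, hi⟩ →
        gfun m c γ (kappa m c * sortedVal m γ ⟨i, by omega⟩ ^ 2) = 0)) ∧
    gfun m c γ 0 = 0 ∧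
    (∃ θ : ℝ, θ < -(tauv m c)⁻¹ ∧ gfun m c γ θ = 0) := by
  have hK := kappa_pos m c hm hc
  refine ⟨?_, gfun_zero m c γ hm hc, part_c m c γ hm hc hγ⟩
  intro i hi
  have hii : i < m := by omega
  constructor
  · -- strict case
    intro hlt0
    show ∃ θ : ℝ, θ ∈ Set.Ioo (kappa m c * sortedVal m γ ⟨i, hii⟩ ^ 2)
        (kappa m c * sortedVal m γ ⟨i + 1, hi⟩ ^ 2) ∧ gfun m c γ θ = 0
    have hlt : sortedVal m γ ⟨i, hii⟩ < sortedVal m γ ⟨i + 1, hi⟩ := hlt0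
    set s1 : ℝ := sortedVal m γ ⟨i, hii⟩ with hs1def
    set s2 : ℝ := sortedVal m γ ⟨i + 1, hi⟩ with hs2def
    have hs10 : 0 ≤ s1 := hγ _
    have hs20 : 0 < s2 := lt_of_le_of_lt hs10 hlt
    have mono : Monotone (fun p => γ (Tuple.sort γ p)) := Tuple.monotone_sort γ
    have hflt : (fun p => γ (Tuple.sort γ p)) ⟨i, hii⟩
        < (fun p => γ (Tuple.sort γ p)) ⟨i + 1, hi⟩ := hlt
    -- counts
    have hc2 : (univ.filter (fun j => γ j < s2)).card = i + 1 := by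
      have t1 : (univ.filter (fun p : Fin m =>
          (fun p => γ (Tuple.sort γ p)) p < (fun p => γ (Tuple.sort γ p)) ⟨i + 1, hi⟩)).card
            = i + 1 := count_lt_sorted m i hi _ mono hflt
      have t2 : (univ.filter (fun p : Fin m => γ (Tuple.sort γ p) < s2)).card
          = (univ.filter (fun j : Fin m => γ j < s2)).card :=
        count_transfer m γ (fun y => y < s2)
      rw [← t2]
      exact t1
    have hc1 : (univ.filter (fun j => γ j < s1)).card
        + (univ.filter (fun j => γ j = s1)).card = i + 1 := by
      have t1 := count_le_sorted m i hi _ mono hflt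
      have t2 : (univ.filter (fun p : Fin m => γ (Tuple.sort γ p) < s1)).card
          = (univ.filter (fun j : Fin m => γ j < s1)).card :=
        count_transfer m γ (fun y => y < s1)
      have t3 : (univ.filter (fun p : Fin m => γ (Tuple.sort γ p) = s1)).card
          = (univ.filter (fun j : Fin m => γ j = s1)).card :=
        count_transfer m γ (fun y => y = s1)
      rw [← t2, ← t3]
      exact t1
    have hk1pos : 0 < (univ.filter (fun j => γ j = s1)).card := by
      apply card_pos.2
      exact ⟨Tuple.sort γ ⟨i, hii⟩, by simp [hs1def, sortedVal]⟩
    obtain ⟨δ1, hδ1, h1⟩ := sign_above m c γ hm hc hγ s1 hs10 ⟨Tuple.sort γ ⟨i, hii⟩, rfl⟩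
    obtain ⟨δ2, hδ2, h2⟩ := sign_below m c γ hm hc hγ s2 hs20 ⟨Tuple.sort γ ⟨i + 1, hi⟩, rfl⟩
    have hexp1 : (univ.filter (fun j => γ j < s1)).card
        + ((Aset m γ s1).card - 1) = i := by
      have : (Aset m γ s1).card = (univ.filter (fun j => γ j = s1)).card := rfl
      omega
    rw [hexp1] at h1
    rw [hc2] at h2
    have hvw : kappa m c * s1 ^ 2 < kappa m c * s2 ^ 2 := by
      have : s1 ^ 2 < s2 ^ 2 := by nlinarith
      exact (mul_lt_mul_iff_right₀ hK).2 this
    set v := kappa m c * s1 ^ 2 with hvdef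
    set w := kappa m c * s2 ^ 2 with hwdef
    obtain ⟨θa, hθa1, hθa2, hθaw⟩ : ∃ θa, v < θa ∧ θa < v + δ1 ∧ θa < w := by
      refine ⟨v + min δ1 (w - v) / 2, ?_, ?_, ?_⟩
      · have := lt_min hδ1 (show (0:ℝ) < w - v by linarith)
        linarith
      · have := min_le_left δ1 (w - v)
        have := lt_min hδ1 (show (0:ℝ) < w - v by linarith)
        linarith
      · have := min_le_right δ1 (w - v)
        have := lt_min hδ1 (show (0:ℝ) < w - v by linarith)
        linarith
    have ha := h1 θa hθa1 hθa2
    obtain ⟨θb, hθb1, hθb2, hab⟩ : ∃ θb, w - δ2 < θb ∧ θb < w ∧ θa < θb := by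
      refine ⟨w - min δ2 (w - θa) / 2, ?_, ?_, ?_⟩
      · have := min_le_left δ2 (w - θa)
        have := lt_min hδ2 (show (0:ℝ) < w - θa by linarith)
        linarith
      · have := lt_min hδ2 (show (0:ℝ) < w - θa by linarith)
        linarith
      · have := min_le_right δ2 (w - θa)
        have := lt_min hδ2 (show (0:ℝ) < w - θa by linarith)
        linarith
    have hb := h2 θb hθb1 hθb2
    rcases Nat.even_or_odd i with he | ho
    · have hpi : (-1 : ℝ) ^ i = 1 := he.neg_one_pow
      have hpi1 : (-1 : ℝ) ^ (i + 1) = -1 := (Even.add_one he).neg_one_pow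
      rw [hpi, one_mul] at ha
      rw [hpi1] at hb
      have hgb : gfun m c γ θb < 0 := by linarith
      have h0mem : (0 : ℝ) ∈ Set.Ioo (gfun m c γ θb) (gfun m c γ θa) := ⟨hgb, ha⟩
      obtain ⟨θ, hθmem, hθeq⟩ :=
        intermediate_value_Ioo' hab.le (cont_gfun m c γ).continuousOn h0mem
      exact ⟨θ, ⟨lt_trans hθa1 hθmem.1, lt_trans hθmem.2 hθb2⟩, hθeq⟩
    · have hpi : (-1 : ℝ) ^ i = -1 := ho.neg_one_pow
      have hpi1 : (-1 : ℝ) ^ (i + 1) = 1 := (Odd.add_one ho).neg_one_pow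
      rw [hpi] at ha
      rw [hpi1, one_mul] at hb
      have hga : gfun m c γ θa < 0 := by linarith
      have h0mem : (0 : ℝ) ∈ Set.Ioo (gfun m c γ θa) (gfun m c γ θb) := ⟨hga, hb⟩
      obtain ⟨θ, hθmem, hθeq⟩ :=
        intermediate_value_Ioo hab.le (cont_gfun m c γ).continuousOn h0mem
      exact ⟨θ, ⟨lt_trans hθa1 hθmem.1, lt_trans hθmem.2 hθb2⟩, hθeq⟩
  · -- equal case
    intro heq0
    show gfun m c γ (kappa m c * sortedVal m γ ⟨i, hii⟩ ^ 2) = 0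
    have heq : sortedVal m γ ⟨i, hii⟩ = sortedVal m γ ⟨i + 1, hi⟩ := heq0
    set s1 : ℝ := sortedVal m γ ⟨i, hii⟩ with hs1def
    have ha : γ (Tuple.sort γ ⟨i, hii⟩) = s1 := rfl
    have hb : γ (Tuple.sort γ ⟨i + 1, hi⟩) = s1 := heq.symm
    have hne : Tuple.sort γ ⟨i, hii⟩ ≠ Tuple.sort γ ⟨i + 1, hi⟩ := by
      intro h
      have := (Tuple.sort γ).injective h
      have : i = i + 1 := congrArg Fin.val this
      omega
    have hk2 : 1 < (Aset m γ s1).card := by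
      apply Finset.one_lt_card.2
      exact ⟨Tuple.sort γ ⟨i, hii⟩, by simp [Aset, ha],
        Tuple.sort γ ⟨i + 1, hi⟩, by simp [Aset, hb], hne⟩
    have hA : (Aset m γ s1).Nonempty := ⟨Tuple.sort γ ⟨i, hii⟩, by simp [Aset, ha]⟩
    rw [gfun_eq m c γ s1 (kappa m c * s1 ^ 2) hA, sub_self,
      zero_pow (by omega : (Aset m γ s1).card - 1 ≠ 0), zero_mul]
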